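/- Let p : [0,2π] → ℝ be twice differentiable and t : [0,2π] → ℝ be differentiable with t'(θ) = (p'(θ))² − (p(θ))² for all θ. Then the curve γ(θ) = (p cos θ − p' sin θ, p sin θ + p' cos θ, t − p'p) is horizontal: z'(θ) − x'(θ)y(θ) + x(θ)y'(θ) = 0 for all θ ∈ [0,2π]. -/
import Mathlib


/-- If t' = (p')² − p² on [0,2π], then the envelope curve
γ = (p cos θ − p' sin θ, p sin θ + p' cos θ, t − p'p) is horizontal on [0,2π]. -/
theorem envelope_is_horizontal (p t : ℝ → ℝ)
    (hp : Differentiable ℝ p) (hp' : Differentiable ℝ (deriv p))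
    (ht : Differentiable ℝ t)
    (hcond : ∀ θ ∈ Set.Icc (0 : ℝ) (2 * Real.pi),
      deriv t θ = (deriv p θ) ^ 2 - (p θ) ^ 2)
    (x y z : ℝ → ℝ)
    (hx : x = fun θ => p θ * Real.cos θ - deriv p θ * Real.sin θ)
    (hy : y = fun θ => p θ * Real.sin θ + deriv p θ * Real.cos θ)
    (hz : z = fun θ => t θ - deriv p θ * p θ) :
    ∀ θ ∈ Set.Icc (0 : ℝ) (2 * Real.pi),
      deriv z θ - deriv x θ * y θ + x θ * deriv y θ = 0 := by
  intro θ hθ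
  have hpθ := (hp θ).hasDerivAt
  have hpθ' := (hp' θ).hasDerivAt
  have htθ := (ht θ).hasDerivAt
  have hxd : deriv x θ = deriv p θ * Real.cos θ - p θ * Real.sin θ -
      (deriv (deriv p) θ * Real.sin θ + deriv p θ * Real.cos θ) := by
    subst hx
    exact ((hpθ.mul (Real.hasDerivAt_cos θ)).sub
      (hpθ'.mul (Real.hasDerivAt_sin θ))).deriv.trans (by ring)
  have hyd : deriv y θ = deriv p θ * Real.sin θ + p θ * Real.cos θ +
      (deriv (deriv p) θ * Real.cos θ - deriv p θ * Real.sin θ) := by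
    subst hy
    exact ((hpθ.mul (Real.hasDerivAt_sin θ)).add
      (hpθ'.mul (Real.hasDerivAt_cos θ))).deriv.trans (by ring)
  have hzd : deriv z θ = deriv t θ -
      (deriv (deriv p) θ * p θ + deriv p θ * deriv p θ) := by
    subst hz
    exact (htθ.sub (hpθ'.mul hpθ)).deriv.trans (by ring)
  have hs := Real.sin_sq_add_cos_sq θ
  rw [hzd, hxd, hyd, hcond θ hθ, hx, hy]
  simp only
  linear_combination p θ * (p θ + deriv (deriv p) θ) * hs
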